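/- Let σ be a three-times differentiable function on the open triangle T whose Hessian determinant is identically equal to π², i.e., σ₁₁σ₂₂ - σ₁₂² = π². Then the vector field ρ ↦ (σ₁₂(ρ)/σ₁₁(ρ), (1/2) σ₂₂(ρ)/σ₁₁(ρ)) has vanishing curl on the region where σ₁₁ ≠ 0; equivalently, σ₁₁₁σ₂₂ + σ₁₁σ₁₂₂ = 2σ₁₂σ₁₁₂. -/

import Mathlib

open Real

/-- Partial derivative in the first variable. -/
noncomputable def p1 (f : ℝ → ℝ → ℝ) (x y : ℝ) : ℝ := deriv (fun x' => f x' y) x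

/-- Partial derivative in the second variable. -/
noncomputable def p2 (f : ℝ → ℝ → ℝ) (x y : ℝ) : ℝ := deriv (fun y' => f x y') y

/-- The open triangle `T`. -/
def Tri : Set (ℝ × ℝ) := {p | 0 < p.1 ∧ 0 < p.2 ∧ p.1 + p.2 < 1}

lemma deriv1_eq (f : ℝ × ℝ → ℝ) (x y : ℝ) (hf : DifferentiableAt ℝ f (x, y)) :
    deriv (fun x' => f (x', y)) x = fderiv ℝ f (x, y) (1, 0) := by
  have h : HasDerivAt (fun x' => ((x', y) : ℝ × ℝ)) ((1:ℝ), (0:ℝ)) x :=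
    (hasDerivAt_id x).prodMk (hasDerivAt_const x y)
  exact (hf.hasFDerivAt.comp_hasDerivAt x h).deriv

lemma deriv2_eq (f : ℝ × ℝ → ℝ) (x y : ℝ) (hf : DifferentiableAt ℝ f (x, y)) :
    deriv (fun y' => f (x, y')) y = fderiv ℝ f (x, y) (0, 1) := by
  have h : HasDerivAt (fun y' => ((x, y') : ℝ × ℝ)) ((0:ℝ), (1:ℝ)) y :=
    (hasDerivAt_const y x).prodMk (hasDerivAt_id y)
  exact (hf.hasFDerivAt.comp_hasDerivAt y h).deriv

lemma pd_eq (f : ℝ × ℝ → ℝ) (v : ℝ × ℝ) (p : ℝ × ℝ)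
    (hf : DifferentiableAt ℝ (fderiv ℝ f) p) (w : ℝ × ℝ) :
    fderiv ℝ (fun q => fderiv ℝ f q v) p w = fderiv ℝ (fderiv ℝ f) p w v := by
  have := fderiv_clm_apply hf (differentiableAt_const v)
  rw [show (fun q => fderiv ℝ f q v) = fun q => (fderiv ℝ f q) ((fun _ => v) q) from rfl, this]
  simp

lemma symm_swap (f : ℝ × ℝ → ℝ) (p : ℝ × ℝ) (hf : ContDiffAt ℝ 2 f p) (v w : ℝ × ℝ) :
    fderiv ℝ (fun q => fderiv ℝ f q v) p w = fderiv ℝ (fun q => fderiv ℝ f q w) p v := by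
  have hd : DifferentiableAt ℝ (fderiv ℝ f) p := by
    have h1 : ContDiffAt ℝ 1 (fderiv ℝ f) p := hf.fderiv_right (by norm_num)
    exact h1.differentiableAt (by norm_num)
  rw [pd_eq f v p hd w, pd_eq f w p hd v, (hf.isSymmSndFDerivAt (by norm_num)) w v]

lemma isOpen_Tri : IsOpen Tri :=
  (isOpen_lt continuous_const continuous_fst).inter
    ((isOpen_lt continuous_const continuous_snd).inter
      (isOpen_lt (continuous_fst.add continuous_snd) continuous_const))

/-- If `σ` is `C³` on `T` with Hessian determinant identically `π²` and `σ₁₁ ≠ 0`, then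
`σ₁₁₁σ₂₂ + σ₁₁σ₁₂₂ = 2σ₁₂σ₁₁₂` on `T` (i.e. the vector field
`(σ₁₂/σ₁₁, (1/2)σ₂₂/σ₁₁)` has vanishing curl). -/
theorem hessian_det_const_implies_curl_free (σ : ℝ → ℝ → ℝ)
    (hσ : ContDiffOn ℝ 3 (fun p : ℝ × ℝ => σ p.1 p.2) Tri)
    (hdet : ∀ p ∈ Tri,
      p1 (p1 σ) p.1 p.2 * p2 (p2 σ) p.1 p.2 - (p2 (p1 σ) p.1 p.2) ^ 2 = π ^ 2)
    (h11 : ∀ p ∈ Tri, p1 (p1 σ) p.1 p.2 ≠ 0) :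
    ∀ p ∈ Tri,
      p1 (p1 (p1 σ)) p.1 p.2 * p2 (p2 σ) p.1 p.2
        + p1 (p1 σ) p.1 p.2 * p2 (p2 (p1 σ)) p.1 p.2
      = 2 * p2 (p1 σ) p.1 p.2 * p2 (p1 (p1 σ)) p.1 p.2 := by
  set F : ℝ × ℝ → ℝ := fun p => σ p.1 p.2 with hF
  set G1 : ℝ × ℝ → ℝ := fun q => fderiv ℝ F q (1, 0) with hG1
  set G2 : ℝ × ℝ → ℝ := fun q => fderiv ℝ F q (0, 1) with hG2
  set G11 : ℝ × ℝ → ℝ := fun q => fderiv ℝ G1 q (1, 0) with hG11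
  set G12 : ℝ × ℝ → ℝ := fun q => fderiv ℝ G1 q (0, 1) with hG12
  set G22 : ℝ × ℝ → ℝ := fun q => fderiv ℝ G2 q (0, 1) with hG22
  -- basic regularity
  have hF3 : ∀ q ∈ Tri, ContDiffAt ℝ 3 F q := fun q hq =>
    (hσ.contDiffAt (isOpen_Tri.mem_nhds hq))
  have hG1c : ∀ q ∈ Tri, ContDiffAt ℝ 2 G1 q := fun q hq =>
    ((hF3 q hq).fderiv_right (by norm_num)).clm_apply contDiffAt_const
  have hG2c : ∀ q ∈ Tri, ContDiffAt ℝ 2 G2 q := fun q hq =>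
    ((hF3 q hq).fderiv_right (by norm_num)).clm_apply contDiffAt_const
  have hG11c : ∀ q ∈ Tri, ContDiffAt ℝ 1 G11 q := fun q hq =>
    ((hG1c q hq).fderiv_right (by norm_num)).clm_apply contDiffAt_const
  have hG12c : ∀ q ∈ Tri, ContDiffAt ℝ 1 G12 q := fun q hq =>
    ((hG1c q hq).fderiv_right (by norm_num)).clm_apply contDiffAt_const
  have hG22c : ∀ q ∈ Tri, ContDiffAt ℝ 1 G22 q := fun q hq =>
    ((hG2c q hq).fderiv_right (by norm_num)).clm_apply contDiffAt_const
  -- first level identifications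
  have E1 : ∀ a b, (a, b) ∈ Tri → p1 σ a b = G1 (a, b) := fun a b hq =>
    deriv1_eq F a b ((hF3 _ hq).differentiableAt (by norm_num))
  have E2 : ∀ a b, (a, b) ∈ Tri → p2 σ a b = G2 (a, b) := fun a b hq =>
    deriv2_eq F a b ((hF3 _ hq).differentiableAt (by norm_num))
  -- eventual membership helpers
  have mem1 : ∀ a b, (a, b) ∈ Tri → ∀ᶠ x' in nhds a, (x', b) ∈ Tri := by
    intro a b hq
    have hc : ContinuousAt (fun x' : ℝ => ((x', b) : ℝ × ℝ)) a :=
      (continuous_id.prodMk continuous_const).continuousAt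
    exact hc (isOpen_Tri.mem_nhds hq)
  have mem2 : ∀ a b, (a, b) ∈ Tri → ∀ᶠ y' in nhds b, (a, y') ∈ Tri := by
    intro a b hq
    have hc : ContinuousAt (fun y' : ℝ => ((a, y') : ℝ × ℝ)) b :=
      (continuous_const.prodMk continuous_id).continuousAt
    exact hc (isOpen_Tri.mem_nhds hq)
  -- second level
  have E11 : ∀ a b, (a, b) ∈ Tri → p1 (p1 σ) a b = G11 (a, b) := by
    intro a b hq
    have heq : (fun x' => p1 σ x' b) =ᶠ[nhds a] fun x' => G1 (x', b) :=
      (mem1 a b hq).mono fun x' hx' => E1 x' b hx'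
    rw [p1, heq.deriv_eq]
    exact deriv1_eq G1 a b ((hG1c _ hq).differentiableAt (by norm_num))
  have E12 : ∀ a b, (a, b) ∈ Tri → p2 (p1 σ) a b = G12 (a, b) := by
    intro a b hq
    have heq : (fun y' => p1 σ a y') =ᶠ[nhds b] fun y' => G1 (a, y') :=
      (mem2 a b hq).mono fun y' hy' => E1 a y' hy'
    rw [p2, heq.deriv_eq]
    exact deriv2_eq G1 a b ((hG1c _ hq).differentiableAt (by norm_num))
  have E22 : ∀ a b, (a, b) ∈ Tri → p2 (p2 σ) a b = G22 (a, b) := by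
    intro a b hq
    have heq : (fun y' => p2 σ a y') =ᶠ[nhds b] fun y' => G2 (a, y') :=
      (mem2 a b hq).mono fun y' hy' => E2 a y' hy'
    rw [p2, heq.deriv_eq]
    exact deriv2_eq G2 a b ((hG2c _ hq).differentiableAt (by norm_num))
  -- now fix p
  rintro ⟨a, b⟩ hp
  -- third level at p
  have E111 : p1 (p1 (p1 σ)) a b = fderiv ℝ G11 (a, b) (1, 0) := by
    have heq : (fun x' => p1 (p1 σ) x' b) =ᶠ[nhds a] fun x' => G11 (x', b) :=
      (mem1 a b hp).mono fun x' hx' => E11 x' b hx'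
    rw [p1, heq.deriv_eq]
    exact deriv1_eq G11 a b ((hG11c _ hp).differentiableAt (by norm_num))
  have E112 : p2 (p1 (p1 σ)) a b = fderiv ℝ G11 (a, b) (0, 1) := by
    have heq : (fun y' => p1 (p1 σ) a y') =ᶠ[nhds b] fun y' => G11 (a, y') :=
      (mem2 a b hp).mono fun y' hy' => E11 a y' hy'
    rw [p2, heq.deriv_eq]
    exact deriv2_eq G11 a b ((hG11c _ hp).differentiableAt (by norm_num))
  have E122 : p2 (p2 (p1 σ)) a b = fderiv ℝ G12 (a, b) (0, 1) := by
    have heq : (fun y' => p2 (p1 σ) a y') =ᶠ[nhds b] fun y' => G12 (a, y') :=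
      (mem2 a b hp).mono fun y' hy' => E12 a y' hy'
    rw [p2, heq.deriv_eq]
    exact deriv2_eq G12 a b ((hG12c _ hp).differentiableAt (by norm_num))
  -- Schwarz swaps
  have swapA : fderiv ℝ G11 (a, b) (0, 1) = fderiv ℝ G12 (a, b) (1, 0) :=
    symm_swap G1 (a, b) (hG1c _ hp) (1, 0) (0, 1)
  have swapB : fderiv ℝ G12 (a, b) (0, 1) = fderiv ℝ G22 (a, b) (1, 0) := by
    have hev : G12 =ᶠ[nhds ((a, b) : ℝ × ℝ)] fun q => fderiv ℝ G2 q (1, 0) := by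
      refine (isOpen_Tri.eventually_mem hp).mono fun q hq => ?_
      exact symm_swap F q ((hF3 q hq).of_le (by norm_num)) (1, 0) (0, 1)
    rw [hev.fderiv_eq]
    exact (symm_swap G2 (a, b) (hG2c _ hp) (0, 1) (1, 0)).symm
  -- differentiate the determinant identity in the first direction
  have hDconst : (fun q => G11 q * G22 q - G12 q * G12 q) =ᶠ[nhds ((a, b) : ℝ × ℝ)]
      fun _ => π ^ 2 := by
    refine (isOpen_Tri.eventually_mem hp).mono fun q hq => ?_
    have := hdet q hq
    obtain ⟨c, d⟩ := q
    rw [E11 c d hq, E22 c d hq, E12 c d hq] at this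
    simpa [pow_two] using this
  have hd11 : DifferentiableAt ℝ G11 (a, b) := (hG11c _ hp).differentiableAt (by norm_num)
  have hd12 : DifferentiableAt ℝ G12 (a, b) := (hG12c _ hp).differentiableAt (by norm_num)
  have hd22 : DifferentiableAt ℝ G22 (a, b) := (hG22c _ hp).differentiableAt (by norm_num)
  have hzero : fderiv ℝ (fun q => G11 q * G22 q - G12 q * G12 q) (a, b) = 0 := by
    rw [hDconst.fderiv_eq]; exact fderiv_const_apply _
  have hexp : fderiv ℝ (fun q => G11 q * G22 q - G12 q * G12 q) (a, b) =
      (G11 (a, b) • fderiv ℝ G22 (a, b) + G22 (a, b) • fderiv ℝ G11 (a, b))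
        - (G12 (a, b) • fderiv ℝ G12 (a, b) + G12 (a, b) • fderiv ℝ G12 (a, b)) := by
    rw [fderiv_fun_sub (f := fun q => G11 q * G22 q) (g := fun q => G12 q * G12 q)
      (hd11.mul hd22) (hd12.mul hd12), fderiv_fun_mul hd11 hd22,
      fderiv_fun_mul hd12 hd12]
  have key : G11 (a, b) * fderiv ℝ G22 (a, b) (1, 0)
      + G22 (a, b) * fderiv ℝ G11 (a, b) (1, 0)
      - 2 * (G12 (a, b) * fderiv ℝ G12 (a, b) (1, 0)) = 0 := by
    have h := hexp.symm.trans hzero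
    have h2 : (G11 (a, b) • fderiv ℝ G22 (a, b) + G22 (a, b) • fderiv ℝ G11 (a, b)
        - (G12 (a, b) • fderiv ℝ G12 (a, b) + G12 (a, b) • fderiv ℝ G12 (a, b)))
        ((1 : ℝ), (0 : ℝ)) = (0 : (ℝ × ℝ) →L[ℝ] ℝ) ((1 : ℝ), (0 : ℝ)) := by rw [h]
    simp at h2
    linarith
  rw [E111, E112, E122, E11 a b hp, E12 a b hp, E22 a b hp, swapA, swapB]
  linarith
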